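/- Medians sum property: Let 1 ≤ m ≤ d and let v : Fin (m+1) → EuclideanSpace ℝ (Fin d) be affinely independent (an m-simplex). For each i let κᵢ = (1/m) • ∑_{j ≠ i} v j, and let E = ∑_{p < q} ‖v p − v q‖². Then ∑ i, ‖v i − κᵢ‖² = ((m+1) / m²) * E. -/

import Mathlib

open Finset

section aux
variable {E : Type*} [NormedAddCommGroup E] [InnerProductSpace ℝ E]

lemma inner_formula (a b : E) : (inner ℝ a b : ℝ) = (‖a‖^2 + ‖b‖^2 - ‖a - b‖^2) / 2 := by
  have := norm_sub_sq_real a b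
  linarith

lemma offdiag_double {n : ℕ} (F : Fin n → Fin n → ℝ)
    (hsymm : ∀ p q, F p q = F q p) (hdiag : ∀ p, F p p = 0) :
    ∑ p : Fin n, ∑ q : Fin n, F p q
      = 2 * ∑ p : Fin n, ∑ q ∈ Finset.univ.filter (fun q => p < q), F p q := by
  have hsplit : ∀ p q : Fin n, F p q
      = (if p < q then F p q else 0) + (if q < p then F p q else 0) := by
    intro p q
    rcases lt_trichotomy p q with h | h | h
    · simp [h, lt_asymm h]
    · simp [h, hdiag]
    · simp [h, lt_asymm h]
  calc ∑ p : Fin n, ∑ q : Fin n, F p q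
      = ∑ p : Fin n, ∑ q : Fin n,
          ((if p < q then F p q else 0) + (if q < p then F p q else 0)) := by
        refine Finset.sum_congr rfl fun p _ => Finset.sum_congr rfl fun q _ => hsplit p q
    _ = (∑ p : Fin n, ∑ q : Fin n, if p < q then F p q else 0)
        + ∑ p : Fin n, ∑ q : Fin n, if q < p then F p q else 0 := by
        simp [Finset.sum_add_distrib]
    _ = 2 * ∑ p : Fin n, ∑ q ∈ Finset.univ.filter (fun q => p < q), F p q := by
        have h2 : (∑ p : Fin n, ∑ q : Fin n, if q < p then F p q else 0)
            = ∑ p : Fin n, ∑ q : Fin n, if p < q then F p q else 0 := by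
          rw [Finset.sum_comm]
          refine Finset.sum_congr rfl fun p _ => Finset.sum_congr rfl fun q _ => ?_
          by_cases h : p < q <;> simp [h, hsymm]
        rw [h2]
        simp [Finset.sum_filter]
        ring

lemma median_sum_key (m : ℕ) (v : Fin (m + 1) → E) :
    ∑ i : Fin (m+1), ‖∑ j : Fin (m+1), (v i - v j)‖ ^ 2 =
      ((m : ℝ) + 1) / 2 * ∑ j : Fin (m+1), ∑ k : Fin (m+1), ‖v j - v k‖ ^ 2 := by
  set F : Fin (m+1) → Fin (m+1) → ℝ := fun p q => ‖v p - v q‖ ^ 2 with hF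
  set A : Fin (m+1) → ℝ := fun p => ∑ k : Fin (m+1), F p k with hA
  set T : ℝ := ∑ j : Fin (m+1), ∑ k : Fin (m+1), F j k with hT
  have hnorm : ∀ i : Fin (m+1), ‖∑ j : Fin (m+1), (v i - v j)‖ ^ 2
      = ∑ j : Fin (m+1), ∑ k : Fin (m+1), (F i j + F i k - F j k) / 2 := by
    intro i
    rw [← real_inner_self_eq_norm_sq, sum_inner]
    refine Finset.sum_congr rfl fun j _ => ?_
    rw [inner_sum]
    refine Finset.sum_congr rfl fun k _ => ?_
    rw [inner_formula]
    have h1 : (v i - v j) - (v i - v k) = v k - v j := by abel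
    rw [h1, norm_sub_rev (v k) (v j)]
  have step1 : ∀ i j : Fin (m+1), ∑ k : Fin (m+1), (F i j + F i k - F j k) / 2
      = (((m:ℝ)+1) * F i j + A i - A j) / 2 := by
    intro i j
    rw [← Finset.sum_div]
    congr 1
    rw [Finset.sum_sub_distrib, Finset.sum_add_distrib, Finset.sum_const, Finset.card_univ,
      Fintype.card_fin, nsmul_eq_mul]
    push_cast
    ring
  have step2 : ∀ i : Fin (m+1), ∑ j : Fin (m+1), (((m:ℝ)+1) * F i j + A i - A j) / 2
      = (2 * ((m:ℝ)+1) * A i - T) / 2 := by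
    intro i
    rw [← Finset.sum_div]
    congr 1
    rw [Finset.sum_sub_distrib, Finset.sum_add_distrib, ← Finset.mul_sum, Finset.sum_const,
      Finset.card_univ, Fintype.card_fin, nsmul_eq_mul, hT, hA]
    push_cast
    ring
  calc ∑ i : Fin (m+1), ‖∑ j : Fin (m+1), (v i - v j)‖ ^ 2
      = ∑ i : Fin (m+1), (2 * ((m:ℝ)+1) * A i - T) / 2 := by
        refine Finset.sum_congr rfl fun i _ => ?_
        rw [hnorm i, Finset.sum_congr rfl fun j _ => step1 i j, step2 i]
    _ = ((m : ℝ) + 1) / 2 * T := by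
        rw [← Finset.sum_div, Finset.sum_sub_distrib, ← Finset.mul_sum, Finset.sum_const,
          Finset.card_univ, Fintype.card_fin, nsmul_eq_mul]
        rw [show (∑ i : Fin (m+1), A i) = T from rfl]
        push_cast
        ring

end aux

theorem medians_sum_property (d m : ℕ) (hm : 1 ≤ m) (hmd : m ≤ d)
    (v : Fin (m + 1) → EuclideanSpace ℝ (Fin d))
    (hai : AffineIndependent ℝ v) :
    ∑ i : Fin (m + 1), ‖v i - (1 / (m : ℝ)) • ∑ t ∈ Finset.univ.erase i, v t‖ ^ 2 =
      (((m : ℝ) + 1) / (m : ℝ) ^ 2) *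
        ∑ p : Fin (m + 1),
          ∑ q ∈ Finset.univ.filter (fun q => p < q), ‖v p - v q‖ ^ 2 := by
  have hm0 : (m : ℝ) ≠ 0 := Nat.cast_ne_zero.mpr (by omega)
  have hmed : ∀ i : Fin (m+1), v i - (1 / (m : ℝ)) • ∑ t ∈ Finset.univ.erase i, v t
      = (1 / (m : ℝ)) • ∑ j : Fin (m+1), (v i - v j) := by
    intro i
    have h1 : ∑ j : Fin (m+1), (v i - v j)
        = (m : ℝ) • v i - ∑ t ∈ Finset.univ.erase i, v t := by
      rw [Finset.sum_sub_distrib, Finset.sum_const, Finset.card_univ, Fintype.card_fin,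
        ← Finset.add_sum_erase _ v (Finset.mem_univ i)]
      have : ((m + 1 : ℕ) : ℝ) • v i = (m : ℝ) • v i + v i := by
        push_cast
        module
      rw [← Nat.cast_smul_eq_nsmul ℝ, this]
      abel
    rw [h1, smul_sub, smul_smul, one_div, inv_mul_cancel₀ hm0, one_smul]
  have hns : ∀ i : Fin (m+1),
      ‖v i - (1 / (m : ℝ)) • ∑ t ∈ Finset.univ.erase i, v t‖ ^ 2
        = (1 / (m:ℝ))^2 * ‖∑ j : Fin (m+1), (v i - v j)‖ ^ 2 := by
    intro i
    rw [hmed i, norm_smul, mul_pow, Real.norm_eq_abs, sq_abs]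
  rw [Finset.sum_congr rfl fun i _ => hns i, ← Finset.mul_sum, median_sum_key]
  rw [offdiag_double (fun p q => ‖v p - v q‖^2)
    (fun p q => by rw [norm_sub_rev]) (fun p => by simp)]
  field_simp
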